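/- arXiv:2108.09543 — 8 statements merged into one kernel-verified Lean document; each statement's English description precedes it below -/
import Mathlib

section
/- Let 𝓕 be an ω-closed family of nonempty inductive subsets of ℕ, let n₀ = min(⋃𝓕), and let 𝓕₀ = {−n₀+F : F ∈ 𝓕}. Then the map 𝔥 : B_ω^𝓕 → B_ω^{𝓕₀} defined by 𝔥(i,j,F) = (i,j,−n₀+F) is a semigroup isomorphism; in particular the semigroups B_ω^𝓕 and B_ω^{𝓕₀} are isomorphic. -/
/-- The shift `s + F = {s + k : k ∈ F}` of a set of naturals by an integer,
taken as a subset of `ℕ`. -/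
def natShift (s : ℤ) (F : Set ℕ) : Set ℕ := {m : ℕ | ∃ k ∈ F, (m : ℤ) = s + (k : ℤ)}

/-- `[k) = {i : ℕ | k ≤ i}`. -/
def upSet (k : ℕ) : Set ℕ := {i : ℕ | k ≤ i}

/-- A subset `F ⊆ ℕ` is inductive if `i ∈ F` implies `i + 1 ∈ F`. -/
def IsInductiveSet (F : Set ℕ) : Prop := ∀ i ∈ F, i + 1 ∈ F

/-- A nonempty family `𝓕` of subsets of `ℕ` is `ω`-closed if
`F₁ ∩ (−n + F₂) ∈ 𝓕` for all `n ∈ ℕ` and `F₁, F₂ ∈ 𝓕`. -/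
def IsOmegaClosed (𝓕 : Set (Set ℕ)) : Prop :=
  𝓕.Nonempty ∧ ∀ (n : ℕ), ∀ F₁ ∈ 𝓕, ∀ F₂ ∈ 𝓕, F₁ ∩ natShift (-(n : ℤ)) F₂ ∈ 𝓕

/-- A bundled `ω`-closed family of subsets of `ℕ`. -/
structure OmegaFamily : Type where
  sets : Set (Set ℕ)
  closed : IsOmegaClosed sets

/-- The family consists of nonempty inductive subsets of `ℕ`. -/
def InductiveNonempty (𝓕 : OmegaFamily) : Prop :=
  ∀ F ∈ 𝓕.sets, F.Nonempty ∧ IsInductiveSet F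

/-- The multiplication of `B_ω^𝓕` on raw triples `(i, j, F)`. -/
def bfMulRaw (x y : ℕ × ℕ × Set ℕ) : ℕ × ℕ × Set ℕ :=
  if x.2.1 < y.1 then
    (x.1 + (y.1 - x.2.1), y.2.1, natShift ((x.2.1 : ℤ) - (y.1 : ℤ)) x.2.2 ∩ y.2.2)
  else if x.2.1 = y.1 then (x.1, y.2.1, x.2.2 ∩ y.2.2)
  else (x.1, (x.2.1 - y.1) + y.2.1, x.2.2 ∩ natShift ((y.1 : ℤ) - (x.2.1 : ℤ)) y.2.2)

lemma natShift_zero (F : Set ℕ) : natShift 0 F = F := by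
  ext m; simp [natShift]

/-- The underlying set of the semigroup `B_ω^𝓕`. -/
def BF (𝓕 : OmegaFamily) : Type := {p : ℕ × ℕ × Set ℕ // p.2.2 ∈ 𝓕.sets}

lemma bfMulRaw_mem (𝓕 : OmegaFamily) {x y : ℕ × ℕ × Set ℕ}
    (hx : x.2.2 ∈ 𝓕.sets) (hy : y.2.2 ∈ 𝓕.sets) : (bfMulRaw x y).2.2 ∈ 𝓕.sets := by
  obtain ⟨i₁, j₁, F₁⟩ := x
  obtain ⟨i₂, j₂, F₂⟩ := y
  simp only [bfMulRaw]
  split_ifs with h h'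
  · have e : ((j₁ : ℤ) - (i₂ : ℤ)) = -(((i₂ - j₁ : ℕ)) : ℤ) := by omega
    simp only []
    rw [e, Set.inter_comm]
    exact 𝓕.closed.2 _ _ hy _ hx
  · have e : (F₁ ∩ F₂ : Set ℕ) = F₁ ∩ natShift (-((0 : ℕ) : ℤ)) F₂ := by
      simp [natShift_zero]
    simp only []
    rw [e]
    exact 𝓕.closed.2 0 _ hx _ hy
  · have e : ((i₂ : ℤ) - (j₁ : ℤ)) = -(((j₁ - i₂ : ℕ)) : ℤ) := by omega
    simp only []
    rw [e]
    exact 𝓕.closed.2 _ _ hx _ hy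

/-- The multiplication of the semigroup `B_ω^𝓕`. -/
instance (𝓕 : OmegaFamily) : Mul (BF 𝓕) :=
  ⟨fun x y => ⟨bfMulRaw x.1 y.1, bfMulRaw_mem 𝓕 x.2 y.2⟩⟩

/-- The bicyclic monoid on `ℕ × ℕ`. -/
def Bicyclic : Type := ℕ × ℕ

instance : Mul Bicyclic :=
  ⟨fun a b => ((a.1 + b.1 - min a.2 b.1, a.2 + b.2 - min a.2 b.1) : ℕ × ℕ)⟩


lemma natShift_inter (s : ℤ) (A B : Set ℕ) :
    natShift s (A ∩ B) = natShift s A ∩ natShift s B := by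
  ext m
  simp only [natShift, Set.mem_setOf_eq, Set.mem_inter_iff]
  constructor
  · rintro ⟨k, ⟨hA, hB⟩, hm⟩
    exact ⟨⟨k, hA, hm⟩, ⟨k, hB, hm⟩⟩
  · rintro ⟨⟨k₁, hA, hm₁⟩, ⟨k₂, hB, hm₂⟩⟩
    have : k₁ = k₂ := by omega
    subst this
    exact ⟨k₁, ⟨hA, hB⟩, hm₁⟩

lemma natShift_comm (d : ℤ) (n₀ : ℕ) (F : Set ℕ) (h : ∀ k ∈ F, n₀ ≤ k) :
    natShift (-(n₀ : ℤ)) (natShift d F) = natShift d (natShift (-(n₀ : ℤ)) F) := by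
  ext m
  simp only [natShift, Set.mem_setOf_eq]
  constructor
  · rintro ⟨k', ⟨k, hk, hk'⟩, hm⟩
    have hn := h k hk
    refine ⟨k - n₀, ⟨k, hk, by push_cast; omega⟩, by push_cast; omega⟩
  · rintro ⟨w, ⟨k, hk, hw⟩, hm⟩
    have hn := h k hk
    refine ⟨(d + k).toNat, ⟨k, hk, by push_cast; omega⟩, by push_cast; omega⟩

lemma natShift_unshift (n₀ : ℕ) (F : Set ℕ) (h : ∀ k ∈ F, n₀ ≤ k) :
    natShift (n₀ : ℤ) (natShift (-(n₀ : ℤ)) F) = F := by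
  ext m
  simp only [natShift, Set.mem_setOf_eq]
  constructor
  · rintro ⟨w, ⟨k, hk, hw⟩, hm⟩
    have : m = k := by omega
    rwa [this]
  · intro hm
    have hn := h m hm
    exact ⟨m - n₀, ⟨m, hm, by push_cast; omega⟩, by push_cast; omega⟩

lemma natShift_reshift (n₀ : ℕ) (G : Set ℕ) :
    natShift (-(n₀ : ℤ)) (natShift (n₀ : ℤ) G) = G := by
  ext m
  simp only [natShift, Set.mem_setOf_eq]
  constructor
  · rintro ⟨w, ⟨k, hk, hw⟩, hm⟩
    have : m = k := by omega
    rwa [this]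
  · intro hm
    exact ⟨n₀ + m, ⟨m, hm, by push_cast; omega⟩, by push_cast; omega⟩

theorem statement1 (𝓕 𝓕₀ : OmegaFamily) (hind : InductiveNonempty 𝓕)
    (h₀ : 𝓕₀.sets =
      {G : Set ℕ | ∃ F ∈ 𝓕.sets, G = natShift (-((sInf (⋃₀ 𝓕.sets) : ℕ) : ℤ)) F}) :
    ∃ e : BF 𝓕 ≃* BF 𝓕₀, ∀ x : BF 𝓕,
      (e x).1 = (x.1.1, x.1.2.1, natShift (-((sInf (⋃₀ 𝓕.sets) : ℕ) : ℤ)) x.1.2.2) := by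
  classical
  set n₀ : ℕ := sInf (⋃₀ 𝓕.sets) with hn₀
  have hge : ∀ F ∈ 𝓕.sets, ∀ k ∈ F, n₀ ≤ k := by
    intro F hF k hk
    exact Nat.sInf_le ⟨F, hF, hk⟩
  have hmemF : ∀ x : BF 𝓕, natShift (-(n₀ : ℤ)) x.1.2.2 ∈ 𝓕₀.sets := by
    intro x
    rw [h₀]
    exact ⟨x.1.2.2, x.2, rfl⟩
  have hmemG : ∀ y : BF 𝓕₀, natShift (n₀ : ℤ) y.1.2.2 ∈ 𝓕.sets := by
    rintro ⟨⟨i, j, G⟩, hG⟩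
    rw [h₀] at hG
    obtain ⟨F, hF, hGF⟩ := hG
    show natShift (n₀ : ℤ) G ∈ 𝓕.sets
    have hGF' : G = natShift (-(n₀ : ℤ)) F := hGF
    rw [hGF', natShift_unshift n₀ F (hge F hF)]
    exact hF
  refine ⟨{
    toFun := fun x => ⟨(x.1.1, x.1.2.1, natShift (-(n₀ : ℤ)) x.1.2.2), hmemF x⟩
    invFun := fun y => ⟨(y.1.1, y.1.2.1, natShift (n₀ : ℤ) y.1.2.2), hmemG y⟩
    left_inv := ?_
    right_inv := ?_
    map_mul' := ?_ }, fun x => rfl⟩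
  · rintro ⟨⟨i, j, F⟩, hF⟩
    apply Subtype.ext
    simp only [natShift_unshift n₀ F (hge F hF)]
  · rintro ⟨⟨i, j, G⟩, hG⟩
    apply Subtype.ext
    simp only [natShift_reshift n₀ G]
  · rintro ⟨⟨i₁, j₁, F₁⟩, hF₁⟩ ⟨⟨i₂, j₂, F₂⟩, hF₂⟩
    apply Subtype.ext
    show ((bfMulRaw (i₁, j₁, F₁) (i₂, j₂, F₂)).1, (bfMulRaw (i₁, j₁, F₁) (i₂, j₂, F₂)).2.1,
          natShift (-(n₀ : ℤ)) (bfMulRaw (i₁, j₁, F₁) (i₂, j₂, F₂)).2.2)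
      = bfMulRaw (i₁, j₁, natShift (-(n₀ : ℤ)) F₁) (i₂, j₂, natShift (-(n₀ : ℤ)) F₂)
    simp only [bfMulRaw]
    split_ifs with h h'
    · simp only [Prod.mk.injEq, true_and]
      rw [natShift_inter, natShift_comm _ n₀ F₁ (hge F₁ hF₁)]
      
    · simp only [Prod.mk.injEq, true_and]
      rw [natShift_inter]
      
    · simp only [Prod.mk.injEq, true_and]
      rw [natShift_inter, natShift_comm _ n₀ F₂ (hge F₂ hF₂)]
end

section
/- Let 𝓕 be an ω-closed family of nonempty inductive subsets of ℕ. The idempotents of the semigroup B_ω^𝓕 are exactly the elements of the form (i,i,F) with i ∈ ℕ and F ∈ 𝓕, and the natural partial order on this band of idempotents is described as follows: (i,i,[a)) ≼ (j,j,[b)) if and only if j ≤ i and j + b ≤ i + a (where [a),[b) ∈ 𝓕). -/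
lemma bf_mul_val (𝓕 : OmegaFamily) (x y : BF 𝓕) : (x * y).1 = bfMulRaw x.1 y.1 := rfl

lemma mem_natShift_upSet {s : ℤ} (hs : s ≤ 0) (b m : ℕ) :
    m ∈ natShift s (upSet b) ↔ (b : ℤ) + s ≤ (m : ℤ) := by
  constructor
  · rintro ⟨k, hk, hm⟩
    simp only [upSet, Set.mem_setOf_eq] at hk
    omega
  · intro h
    refine ⟨((m : ℤ) - s).toNat, ?_, ?_⟩
    · simp only [upSet, Set.mem_setOf_eq]; omega
    · omega

lemma key_inter (a b i j : ℕ) (h : j ≤ i) :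
    (upSet a ∩ natShift ((j : ℤ) - (i : ℤ)) (upSet b) = upSet a) ↔ j + b ≤ i + a := by
  have hs : ((j : ℤ) - (i : ℤ)) ≤ 0 := by omega
  constructor
  · intro he
    have ha : a ∈ upSet a := by simp [upSet]
    rw [← he] at ha
    have := (mem_natShift_upSet hs b a).1 ha.2
    omega
  · intro hc
    ext m
    rw [Set.mem_inter_iff, mem_natShift_upSet hs]
    simp only [upSet, Set.mem_setOf_eq]
    omega

theorem statement3 (𝓕 : OmegaFamily) (hind : InductiveNonempty 𝓕) :
    (∀ x : BF 𝓕, x * x = x ↔ x.1.1 = x.1.2.1) ∧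
    (∀ (i j a b : ℕ), upSet a ∈ 𝓕.sets → upSet b ∈ 𝓕.sets →
      ∀ x y : BF 𝓕, x.1 = (i, i, upSet a) → y.1 = (j, j, upSet b) →
        ((x * y = x ∧ y * x = x) ↔ (j ≤ i ∧ j + b ≤ i + a))) := by
  constructor
  · rintro ⟨⟨i, j, F⟩, hF⟩
    constructor
    · intro h
      have h1 : bfMulRaw (i, j, F) (i, j, F) = (i, j, F) :=
        congrArg Subtype.val h
      simp only [bfMulRaw] at h1
      split_ifs at h1 with hlt heq
      · have := congrArg Prod.fst h1
        simp only at this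
        omega
      · exact heq.symm
      · have := congrArg (fun p => p.2.1) h1
        simp only at this
        omega
    · intro hij
      apply Subtype.ext
      show bfMulRaw (i, j, F) (i, j, F) = (i, j, F)
      have hij' : i = j := hij
      subst hij'
      simp [bfMulRaw]
  · intro i j a b ha hb x y hx hy
    have hmul : (x * y).1 = bfMulRaw (i, i, upSet a) (j, j, upSet b) := by
      rw [bf_mul_val, hx, hy]
    have hmul' : (y * x).1 = bfMulRaw (j, j, upSet b) (i, i, upSet a) := by
      rw [bf_mul_val, hx, hy]
    constructor
    · rintro ⟨h1, h2⟩
      have h1' : bfMulRaw (i, i, upSet a) (j, j, upSet b) = (i, i, upSet a) := by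
        rw [← hmul, h1, hx]
      simp only [bfMulRaw] at h1'
      split_ifs at h1' with hlt heq
      · have := congrArg Prod.fst h1'
        simp only at this
        omega
      · -- i = j, set equality gives b ≤ a
        have hset : upSet a ∩ upSet b = upSet a := congrArg (fun p => p.2.2) h1'
        have ha' : a ∈ upSet a := by simp [upSet]
        rw [← hset] at ha'
        have hba : b ≤ a := ha'.2
        constructor <;> omega
      · have hji : j ≤ i := by omega
        have hset : upSet a ∩ natShift ((j : ℤ) - (i : ℤ)) (upSet b) = upSet a :=
          congrArg (fun p => p.2.2) h1'
        have := (key_inter a b i j hji).1 hset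
        exact ⟨hji, this⟩
    · rintro ⟨hji, hc⟩
      have hset : upSet a ∩ natShift ((j : ℤ) - (i : ℤ)) (upSet b) = upSet a :=
        (key_inter a b i j hji).2 hc
      rcases eq_or_lt_of_le hji with heq | hlt
      · subst heq
        have hba : b ≤ a := by omega
        have hab : upSet a ∩ upSet b = upSet a := by
          ext m; simp only [Set.mem_inter_iff, upSet, Set.mem_setOf_eq]; omega
        constructor
        · apply Subtype.ext
          rw [hmul, hx]
          simp [bfMulRaw, hab]
        · apply Subtype.ext
          rw [hmul', hx]
          simp [bfMulRaw, Set.inter_comm, hab]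
      · constructor
        · apply Subtype.ext
          rw [hmul, hx]
          have h1 : ¬ (i < j) := by omega
          have h2 : ¬ (i = j) := by omega
          simp only [bfMulRaw, if_neg h1, if_neg h2]
          rw [hset]
          have : (i - j) + j = i := by omega
          rw [this]
        · apply Subtype.ext
          rw [hmul', hx]
          simp only [bfMulRaw, if_pos hlt]
          rw [Set.inter_comm, hset]
          have : j + (i - j) = i := by omega
          rw [this]
end

section
/- Let 𝓕 be an ω-closed family of nonempty inductive subsets of ℕ and let S be a subsemigroup of B_ω^𝓕 that is isomorphic to the bicyclic semigroup B_ω. Then there exists a set F ∈ 𝓕 such that S is contained in the subsemigroup B_ω^{{F}} = {(i,j,F) : i,j ∈ ℕ} of B_ω^𝓕. -/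
/-- Helper constructor for elements of the bicyclic monoid. -/
def bc (m n : ℕ) : Bicyclic := (m, n)

lemma bc_mul (m n k l : ℕ) :
    bc m n * bc k l = bc (m + k - min n k) (n + l - min n k) := rfl

lemma bc_congr {m n m' n' : ℕ} (h1 : m = m') (h2 : n = n') : bc m n = bc m' n' := by
  rw [h1, h2]

lemma mem_add_of_inductive {F : Set ℕ} (hF : IsInductiveSet F) {m : ℕ} (hm : m ∈ F) :
    ∀ d : ℕ, m + d ∈ F
  | 0 => hm
  | d + 1 => hF _ (mem_add_of_inductive hF hm d)

lemma subset_natShift_of_inductive {F : Set ℕ} (hF : IsInductiveSet F) {s : ℤ}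
    (hs : s ≤ 0) : F ⊆ natShift s F := by
  intro m hm
  refine ⟨m + (-s).toNat, mem_add_of_inductive hF hm _, ?_⟩
  push_cast
  omega

lemma inter_natShift_right {F : Set ℕ} (hF : IsInductiveSet F) {s : ℤ} (hs : s ≤ 0) :
    F ∩ natShift s F = F :=
  Set.inter_eq_left.mpr (subset_natShift_of_inductive hF hs)

lemma inter_natShift_left {F : Set ℕ} (hF : IsInductiveSet F) {s : ℤ} (hs : s ≤ 0) :
    natShift s F ∩ F = F :=
  Set.inter_eq_right.mpr (subset_natShift_of_inductive hF hs)

lemma step_right {F : Set ℕ} (hF : IsInductiveSet F) {c j' j : ℕ} (h : c < j') :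
    bfMulRaw (c, j', F) (c, j, F) = (c, (j' - c) + j, F) := by
  simp only [bfMulRaw]
  split_ifs with h1 h2
  · exact absurd h1 (by omega)
  · exact absurd h2 (by omega)
  · rw [inter_natShift_right hF (by omega : (c : ℤ) - (j' : ℤ) ≤ 0)]

lemma step_left {F : Set ℕ} (hF : IsInductiveSet F) {i i' c : ℕ} (h : c < i') :
    bfMulRaw (i, c, F) (i', c, F) = (i + (i' - c), c, F) := by
  simp only [bfMulRaw]
  split_ifs
  · rw [inter_natShift_left hF (by omega : (c : ℤ) - (i' : ℤ) ≤ 0)]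

lemma step_mid (F G : Set ℕ) (i c j : ℕ) :
    bfMulRaw (i, c, F) (c, j, G) = (i, j, F ∩ G) := by
  simp only [bfMulRaw]
  split_ifs with h1
  · exact absurd h1 (by omega)
  · rfl

lemma idem_diag {a b : ℕ} {F : Set ℕ} (h : bfMulRaw (a, b, F) (a, b, F) = (a, b, F)) :
    a = b := by
  simp only [bfMulRaw] at h
  split_ifs at h with h1 h2
  · simp only [Prod.mk.injEq] at h
    omega
  · omega
  · simp only [Prod.mk.injEq] at h
    omega

lemma key_shape {c i j k l : ℕ} {F0 G H : Set ℕ}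
    (hEX : bfMulRaw (c, c, F0) (i, j, G) = (i, j, G))
    (hXe : bfMulRaw (i, j, G) (c, c, F0) = (i, j, G))
    (hYe : bfMulRaw (k, l, H) (c, c, F0) = (k, l, H))
    (hXY : bfMulRaw (i, j, G) (k, l, H) = (c, c, F0)) :
    i = c ∧ l = c ∧ j = k ∧ c ≤ j ∧ G = F0 ∧ H = F0 := by
  have hic : c ≤ i := by
    rcases le_or_gt c i with h | h
    · exact h
    · exfalso
      simp only [bfMulRaw] at hEX
      split_ifs at hEX with h1 h2 <;> simp only [Prod.mk.injEq] at hEX <;> omega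
  have hjc : c ≤ j := by
    rcases le_or_gt c j with h | h
    · exact h
    · exfalso
      simp only [bfMulRaw] at hXe
      split_ifs at hXe with h1 h2 <;> simp only [Prod.mk.injEq] at hXe <;> omega
  have hlc : c ≤ l := by
    rcases le_or_gt c l with h | h
    · exact h
    · exfalso
      simp only [bfMulRaw] at hYe
      split_ifs at hYe with h1 h2 <;> simp only [Prod.mk.injEq] at hYe <;> omega
  have hmain : j = k ∧ i = c ∧ l = c ∧ G ∩ H = F0 := by
    simp only [bfMulRaw] at hXY
    split_ifs at hXY with h1 h2 <;> simp only [Prod.mk.injEq] at hXY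
    · exact absurd hXY.1 (by omega)
    · exact ⟨h2, hXY.1, hXY.2.1, hXY.2.2⟩
    · exact absurd hXY.2.1 (by omega)
  obtain ⟨hjk, hi, hl, hGH⟩ := hmain
  subst hi
  subst hl
  have hGsub : G ⊆ F0 := by
    simp only [bfMulRaw] at hEX
    split_ifs at hEX with h1 <;> simp only [Prod.mk.injEq] at hEX
    · exact absurd h1 (by omega)
    · rw [← hEX.2.2]; exact Set.inter_subset_left
  have hHsub : H ⊆ F0 := by
    simp only [bfMulRaw] at hYe
    split_ifs at hYe with h1 <;> simp only [Prod.mk.injEq] at hYe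
    · exact absurd h1 (by omega)
    · rw [← hYe.2.2]; exact Set.inter_subset_right
  have hG : G = F0 :=
    Set.Subset.antisymm hGsub (by rw [← hGH]; exact Set.inter_subset_left)
  have hH : H = F0 :=
    Set.Subset.antisymm hHsub (by rw [← hGH]; exact Set.inter_subset_right)
  exact ⟨rfl, rfl, hjk, hjc, hG, hH⟩

theorem statement4 (𝓕 : OmegaFamily) (hind : InductiveNonempty 𝓕)
    (S : Subsemigroup (BF 𝓕)) (hiso : Nonempty (Bicyclic ≃* S)) :
    ∃ F ∈ 𝓕.sets, ∀ x ∈ S, x.1.2.2 = F := by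
  obtain ⟨φ⟩ := hiso
  set T : Bicyclic → ℕ × ℕ × Set ℕ := fun a => ((φ a : S) : BF 𝓕).1 with hT
  have hmul : ∀ a b : Bicyclic, T (a * b) = bfMulRaw (T a) (T b) := by
    intro a b
    exact congrArg (fun z : S => ((z : BF 𝓕).1 : ℕ × ℕ × Set ℕ)) (map_mul φ a b)
  have hinj : ∀ a b : Bicyclic, T a = T b → a = b := by
    intro a b h
    exact φ.injective (Subtype.ext (Subtype.ext h))
  have hmem : ∀ a : Bicyclic, (T a).2.2 ∈ 𝓕.sets := fun a => ((φ a : S) : BF 𝓕).2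
  -- bicyclic multiplication facts
  have m0000 : bc 0 0 * bc 0 0 = bc 0 0 := by rw [bc_mul]; exact bc_congr (by omega) (by omega)
  have m0001 : bc 0 0 * bc 0 1 = bc 0 1 := by rw [bc_mul]; exact bc_congr (by omega) (by omega)
  have m0100 : bc 0 1 * bc 0 0 = bc 0 1 := by rw [bc_mul]; exact bc_congr (by omega) (by omega)
  have m1000 : bc 1 0 * bc 0 0 = bc 1 0 := by rw [bc_mul]; exact bc_congr (by omega) (by omega)
  have m0110 : bc 0 1 * bc 1 0 = bc 0 0 := by rw [bc_mul]; exact bc_congr (by omega) (by omega)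
  have m0101 : bc 0 1 * bc 0 1 = bc 0 2 := by rw [bc_mul]; exact bc_congr (by omega) (by omega)
  -- components of the images of (0,0), (0,1), (1,0)
  rcases hE : T (bc 0 0) with ⟨a, b, F0⟩
  rcases hX : T (bc 0 1) with ⟨i, j, G⟩
  rcases hY : T (bc 1 0) with ⟨k, l, H⟩
  have hEE : bfMulRaw (a, b, F0) (a, b, F0) = (a, b, F0) := by
    rw [← hE, ← hmul, m0000]
  have hab : a = b := idem_diag hEE
  subst hab
  have hEX : bfMulRaw (a, a, F0) (i, j, G) = (i, j, G) := by
    rw [← hE, ← hX, ← hmul, m0001]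
  have hXe : bfMulRaw (i, j, G) (a, a, F0) = (i, j, G) := by
    rw [← hE, ← hX, ← hmul, m0100]
  have hYe : bfMulRaw (k, l, H) (a, a, F0) = (k, l, H) := by
    rw [← hE, ← hY, ← hmul, m1000]
  have hXY : bfMulRaw (i, j, G) (k, l, H) = (a, a, F0) := by
    rw [← hE, ← hX, ← hY, ← hmul, m0110]
  obtain ⟨hi, hl, hjk, haj, hG, hH⟩ := key_shape hEX hXe hYe hXY
  rw [hi, hG] at hX
  rw [hl, hH, ← hjk] at hY
  -- F0 is inductive
  have hF0mem : F0 ∈ 𝓕.sets := by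
    have := hmem (bc 0 0)
    rw [hE] at this
    exact this
  have hF0ind : IsInductiveSet F0 := (hind F0 hF0mem).2
  -- j > a  (otherwise the image of (0,1) would be idempotent)
  have haj' : a < j := by
    rcases lt_or_eq_of_le haj with h | h
    · exact h
    · exfalso
      rw [← h] at hX
      have hid : T (bc 0 2) = T (bc 0 1) := by
        rw [← m0101, hmul, hX, step_mid F0 F0 a a a, Set.inter_self]
      have h21 : bc 0 2 = bc 0 1 := hinj _ _ hid
      have h2 : (2 : ℕ) = 1 := congrArg (fun p : Bicyclic => p.2) h21
      omega
  -- powers of the image of (0,1)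
  have hR : ∀ n : ℕ, ∃ jn, a < jn ∧ T (bc 0 (n + 1)) = (a, jn, F0) := by
    intro n
    induction n with
    | zero => exact ⟨j, haj', hX⟩
    | succ n ih =>
      obtain ⟨jn, hjn, hTn⟩ := ih
      have hmulfact : bc 0 (n + 1) * bc 0 1 = bc 0 (n + 2) := by
        rw [bc_mul]; exact bc_congr (by omega) (by omega)
      have := hmul (bc 0 (n + 1)) (bc 0 1)
      rw [hmulfact, hTn, hX, step_right hF0ind hjn] at this
      exact ⟨(jn - a) + j, by omega, this⟩
  -- powers of the image of (1,0)
  have hL : ∀ m : ℕ, ∃ im, a < im ∧ T (bc (m + 1) 0) = (im, a, F0) := by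
    intro m
    induction m with
    | zero => exact ⟨j, haj', hY⟩
    | succ m ih =>
      obtain ⟨im, him, hTm⟩ := ih
      have hmulfact : bc (m + 1) 0 * bc 1 0 = bc (m + 2) 0 := by
        rw [bc_mul]; exact bc_congr (by omega) (by omega)
      have := hmul (bc (m + 1) 0) (bc 1 0)
      rw [hmulfact, hTm, hY, step_left hF0ind haj'] at this
      exact ⟨im + (j - a), by omega, this⟩
  refine ⟨F0, hF0mem, ?_⟩
  intro x hx
  have hxa : T (φ.symm ⟨x, hx⟩) = (x.1 : ℕ × ℕ × Set ℕ) :=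
    congrArg (fun z : S => ((z : BF 𝓕).1 : ℕ × ℕ × Set ℕ)) (φ.apply_symm_apply ⟨x, hx⟩)
  set p : Bicyclic := φ.symm ⟨x, hx⟩ with hp
  have hpe : p = bc p.1 p.2 := rfl
  rw [hpe] at hxa
  rcases hm : p.1 with _ | m <;> rcases hn : p.2 with _ | n <;> rw [hm, hn] at hxa
  · rw [hE] at hxa
    rw [← hxa]
  · obtain ⟨jn, _, hTn⟩ := hR n
    rw [hTn] at hxa
    rw [← hxa]
  · obtain ⟨im, _, hTm⟩ := hL m
    rw [hTm] at hxa
    rw [← hxa]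
  · obtain ⟨jn, _, hTn⟩ := hR n
    obtain ⟨im, _, hTm⟩ := hL m
    have hmulfact : bc (m + 1) 0 * bc 0 (n + 1) = bc (m + 1) (n + 1) := by
      rw [bc_mul]; exact bc_congr (by omega) (by omega)
    have hprod := hmul (bc (m + 1) 0) (bc 0 (n + 1))
    rw [hmulfact, hTn, hTm, step_mid F0 F0 im a jn, Set.inter_self, hxa] at hprod
    rw [hprod]
end

section
/- Let 𝓕 be an ω-closed family of nonempty inductive subsets of ℕ. The map 𝔥 : B_ω^𝓕 → B_ω defined by 𝔥(i,j,F) = (i,j) is a surjective semigroup homomorphism onto the bicyclic monoid, and the congruence on B_ω^𝓕 induced by 𝔥 is not a group congruence; in particular, there exist congruences on B_ω^𝓕 that are not group congruences. -/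
/-- A congruence `c` on a multiplicative structure `S` is a group congruence
if the quotient `S/c` is a group: its multiplication is associative and has a
two-sided identity and two-sided inverses. -/
def IsGroupCongruence {S : Type*} [Mul S] (c : Con S) : Prop :=
  (∀ a b d : c.Quotient, a * b * d = a * (b * d)) ∧
  ∃ e : c.Quotient, (∀ a, e * a = a ∧ a * e = a) ∧ ∀ a, ∃ b, b * a = e ∧ a * b = e

lemma bicyclic_mul_def (a b : Bicyclic) :
    a * b = ((a.1 + b.1 - min a.2 b.1, a.2 + b.2 - min a.2 b.1) : ℕ × ℕ) := rfl

theorem statement6 (𝓕 : OmegaFamily) (hind : InductiveNonempty 𝓕) :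
    ∃ f : BF 𝓕 →ₙ* Bicyclic,
      (∀ x : BF 𝓕, f x = ((x.1.1, x.1.2.1) : ℕ × ℕ)) ∧
      Function.Surjective f ∧
      ¬ IsGroupCongruence (Con.ker f) ∧
      ∃ c : Con (BF 𝓕), ¬ IsGroupCongruence c := by
  classical
  obtain ⟨F₀, hF₀⟩ := 𝓕.closed.1
  refine ⟨{ toFun := fun x => ((x.1.1, x.1.2.1) : ℕ × ℕ)
            map_mul' := ?_ }, fun x => rfl, ?_, ?_⟩
  · rintro ⟨⟨i₁, j₁, F₁⟩, h₁⟩ ⟨⟨i₂, j₂, F₂⟩, h₂⟩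
    erw [bicyclic_mul_def]
    show ((bfMulRaw (i₁, j₁, F₁) (i₂, j₂, F₂)).1,
          (bfMulRaw (i₁, j₁, F₁) (i₂, j₂, F₂)).2.1) = _
    simp only [bfMulRaw]
    split_ifs with h h' <;> apply Prod.ext <;> simp <;> omega
  · intro p
    exact ⟨⟨(p.1, p.2, F₀), hF₀⟩, rfl⟩
  set f : BF 𝓕 →ₙ* Bicyclic :=
    { toFun := fun x => ((x.1.1, x.1.2.1) : ℕ × ℕ), map_mul' := _ } with hfdef
  have key : ¬ IsGroupCongruence (Con.ker f) := by
    intro hg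
    set c := Con.ker f with hc
    obtain ⟨hassoc, e, hid, hinv⟩ := hg
    set g : c.Quotient → Bicyclic := Quotient.lift (fun x => f x) (fun a b h => h) with hgdef
    have gmk : ∀ a : BF 𝓕, g (a : c.Quotient) = f a := fun a => rfl
    have gmul : ∀ a b : BF 𝓕, g ((a : c.Quotient) * (b : c.Quotient)) = f a * f b := by
      intro a b
      have : ((a : c.Quotient) * (b : c.Quotient)) = ((a * b : BF 𝓕) : c.Quotient) := rfl
      rw [this, gmk, f.map_mul]
    -- e = class of some e'
    obtain ⟨e', he'⟩ := Quot.exists_rep e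
    have he' : (e' : c.Quotient) = e := he'
    set a₀ : BF 𝓕 := ⟨(0, 0, F₀), hF₀⟩ with ha₀
    have hid0 : e * (a₀ : c.Quotient) = (a₀ : c.Quotient) := (hid _).1
    have hge : g e = ((0, 0) : ℕ × ℕ) := by
      have h1 : g (e * (a₀ : c.Quotient)) = g (a₀ : c.Quotient) := by rw [hid0]
      rw [← he'] at h1
      rw [gmul, gmk] at h1
      have hfa₀ : f a₀ = ((0, 0) : ℕ × ℕ) := rfl
      erw [hfa₀, bicyclic_mul_def] at h1
      have hfe : f e' = ((f e').1, (f e').2) := rfl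
      rw [← he', gmk]
      have : (((f e').1 + 0 - min (f e').2 0, (f e').2 + 0 - min (f e').2 0) : ℕ × ℕ)
          = ((0,0) : ℕ × ℕ) := h1
      have h2 := congrArg Prod.fst this
      have h3 := congrArg Prod.snd this
      simp at h2 h3
      exact Prod.ext (by simpa using h2) (by simpa using h3)
    set x₀ : BF 𝓕 := ⟨(0, 1, F₀), hF₀⟩ with hx₀
    obtain ⟨b, hb, -⟩ := hinv (x₀ : c.Quotient)
    obtain ⟨b', hb'⟩ := Quot.exists_rep b
    have hb' : (b' : c.Quotient) = b := hb'
    have h1 : g (b * (x₀ : c.Quotient)) = g e := by rw [hb]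
    rw [← hb', gmul, hge] at h1
    have hfx₀ : f x₀ = ((0, 1) : ℕ × ℕ) := rfl
    erw [hfx₀, bicyclic_mul_def] at h1
    have h3 := congrArg Prod.snd h1
    simp at h3
  exact ⟨key, ⟨_, key⟩⟩
end

section
/- Let 𝓕 be an ω-closed family of nonempty inductive subsets of ℕ and let F ∈ 𝓕. Then the subsemigroup B_ω^{{F}} = {(i,j,F) : i,j ∈ ℕ} is a homomorphic retract of the semigroup B_ω^𝓕; concretely, the map (i,j,G) ↦ (i,j,F) is a homomorphism of B_ω^𝓕 into itself whose image is B_ω^{{F}} and whose set of fixed points is B_ω^{{F}}. -/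
lemma inter_natShift_self {F : Set ℕ} (hFind : IsInductiveSet F) (n : ℕ) :
    F ∩ natShift (-(n : ℤ)) F = F := by
  apply Set.eq_of_subset_of_subset Set.inter_subset_left
  intro m hm
  refine ⟨hm, ⟨m + n, ?_, by push_cast; ring⟩⟩
  induction n with
  | zero => simpa using hm
  | succ k ih => exact hFind _ ih

theorem statement8 (𝓕 : OmegaFamily) (hind : InductiveNonempty 𝓕)
    (F : Set ℕ) (hF : F ∈ 𝓕.sets) :
    ∃ h : BF 𝓕 →ₙ* BF 𝓕,
      (∀ x : BF 𝓕, (h x).1 = (x.1.1, x.1.2.1, F)) ∧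
      Set.range h = {x : BF 𝓕 | x.1.2.2 = F} ∧
      {x : BF 𝓕 | h x = x} = {x : BF 𝓕 | x.1.2.2 = F} := by
  have hFind : IsInductiveSet F := (hind F hF).2
  have key : ∀ x y : ℕ × ℕ × Set ℕ,
      bfMulRaw (x.1, x.2.1, F) (y.1, y.2.1, F) = ((bfMulRaw x y).1, (bfMulRaw x y).2.1, F) := by
    rintro ⟨i₁, j₁, F₁⟩ ⟨i₂, j₂, F₂⟩
    simp only [bfMulRaw]
    split_ifs with h h'
    · have e : ((j₁ : ℤ) - (i₂ : ℤ)) = -(((i₂ - j₁ : ℕ)) : ℤ) := by omega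
      rw [e, Set.inter_comm, inter_natShift_self hFind]
    · simp
    · have e : ((i₂ : ℤ) - (j₁ : ℤ)) = -(((j₁ - i₂ : ℕ)) : ℤ) := by omega
      rw [e, inter_natShift_self hFind]
  refine ⟨⟨fun x => ⟨(x.1.1, x.1.2.1, F), hF⟩, ?_⟩, fun x => rfl, ?_, ?_⟩
  · intro x y
    apply Subtype.ext
    show ((bfMulRaw x.1 y.1).1, (bfMulRaw x.1 y.1).2.1, F) = bfMulRaw _ _
    exact (key x.1 y.1).symm
  · ext x
    constructor
    · rintro ⟨y, rfl⟩; rfl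
    · intro hx
      refine ⟨x, ?_⟩
      apply Subtype.ext
      show (x.1.1, x.1.2.1, F) = x.1
      rw [← hx]
  · ext x
    constructor
    · intro hx
      rw [Set.mem_setOf_eq, ← hx]
      rfl
    · intro hx
      apply Subtype.ext
      show (x.1.1, x.1.2.1, F) = x.1
      rw [Set.mem_setOf_eq] at hx
      rw [← hx]
end

section
/- Let 𝓕 be an ω-closed family of nonempty inductive subsets of ℕ with [k) ∈ 𝓕 for some k ∈ ℕ. Then the map 𝔥_k : B_ω^𝓕 → B_ω^𝓕 defined by 𝔥_k(i,j,[a)) = (i,j,[k)) if a ≤ k and 𝔥_k(i,j,[a)) = (i,j,[a)) if a > k, is a semigroup homomorphism. -/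
/-- The map `𝔥_k` sending `(i, j, [a))` to `(i, j, [k))` when `a ≤ k` and
fixing it otherwise (every nonempty inductive `F` equals `[sInf F)`). -/
noncomputable def retractMap (𝓕 : OmegaFamily) (k : ℕ) (hk : upSet k ∈ 𝓕.sets) : BF 𝓕 → BF 𝓕 :=
  fun z => if sInf z.1.2.2 ≤ k then ⟨(z.1.1, z.1.2.1, upSet k), hk⟩ else z

lemma sInf_upSet (t : ℕ) : sInf (upSet t) = t :=
  le_antisymm (Nat.sInf_le (le_refl t)) (Nat.sInf_mem (⟨t, le_refl t⟩ : (upSet t).Nonempty))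

lemma family_eq_upSet {𝓕 : OmegaFamily} (hind : InductiveNonempty 𝓕) {F : Set ℕ}
    (hF : F ∈ 𝓕.sets) : F = upSet (sInf F) := by
  obtain ⟨hne, hindF⟩ := hind F hF
  ext m
  constructor
  · exact fun hm => Nat.sInf_le hm
  · intro hm
    obtain ⟨d, hd⟩ := Nat.exists_eq_add_of_le hm
    subst hd
    clear hm
    induction d with
    | zero => exact Nat.sInf_mem hne
    | succ n ih => exact hindF _ ih

lemma natShift_upSet (s : ℤ) (a : ℕ) : natShift s (upSet a) = upSet (s + a).toNat := by
  ext m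
  simp only [natShift, upSet, Set.mem_setOf_eq]
  constructor
  · rintro ⟨x, hx, hm⟩; omega
  · intro hm; exact ⟨((m : ℤ) - s).toNat, by omega, by omega⟩

lemma upSet_inter (a b : ℕ) : upSet a ∩ upSet b = upSet (max a b) := by
  ext m; simp only [upSet, Set.mem_inter_iff, Set.mem_setOf_eq]; omega

lemma retractMap_val (𝓕 : OmegaFamily) (k : ℕ) (hk : upSet k ∈ 𝓕.sets) (z : BF 𝓕) :
    (retractMap 𝓕 k hk z).1 =
      if sInf z.1.2.2 ≤ k then (z.1.1, z.1.2.1, upSet k) else z.1 := by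
  simp only [retractMap]
  split_ifs with h <;> simp [h]

lemma ite_upSet (i j a k : ℕ) :
    (if a ≤ k then ((i, j, upSet k) : ℕ × ℕ × Set ℕ) else (i, j, upSet a)) =
      (i, j, upSet (max a k)) := by
  split_ifs with h
  · rw [max_eq_right h]
  · rw [max_eq_left (by omega)]

lemma shift_max_left (s : ℤ) (hs : s ≤ 0) (a b k : ℕ) :
    (s + ↑a).toNat ⊔ b ⊔ k = (s + ↑(a ⊔ k)).toNat ⊔ (b ⊔ k) := by
  simp only [Nat.max_def]
  split_ifs <;> omega

lemma max_max_k (a b k : ℕ) : a ⊔ b ⊔ k = a ⊔ k ⊔ (b ⊔ k) := by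
  simp only [Nat.max_def]
  split_ifs <;> omega

lemma shift_max_right (s : ℤ) (hs : s ≤ 0) (a b k : ℕ) :
    a ⊔ (s + ↑b).toNat ⊔ k = a ⊔ k ⊔ (s + ↑(b ⊔ k)).toNat := by
  simp only [Nat.max_def]
  split_ifs <;> omega

theorem statement9 (𝓕 : OmegaFamily) (hind : InductiveNonempty 𝓕)
    (k : ℕ) (hk : upSet k ∈ 𝓕.sets) :
    ∀ x y : BF 𝓕,
      retractMap 𝓕 k hk (x * y) = retractMap 𝓕 k hk x * retractMap 𝓕 k hk y := by
  intro x y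
  obtain ⟨⟨i₁, j₁, F₁⟩, h₁⟩ := x
  obtain ⟨⟨i₂, j₂, F₂⟩, h₂⟩ := y
  obtain ⟨a, rfl⟩ : ∃ a, F₁ = upSet a := ⟨_, family_eq_upSet hind h₁⟩
  obtain ⟨b, rfl⟩ : ∃ b, F₂ = upSet b := ⟨_, family_eq_upSet hind h₂⟩
  apply Subtype.ext
  have hmul : ∀ p q : BF 𝓕, (p * q).1 = bfMulRaw p.1 q.1 := fun _ _ => rfl
  rw [hmul, retractMap_val]
  refine (?_ : _ = bfMulRaw (if sInf (upSet a) ≤ k then (i₁, j₁, upSet k) else (i₁, j₁, upSet a))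
    (if sInf (upSet b) ≤ k then (i₂, j₂, upSet k) else (i₂, j₂, upSet b))).trans
    (congrArg₂ bfMulRaw (retractMap_val 𝓕 k hk (⟨(i₁, j₁, upSet a), h₁⟩ : BF 𝓕))
      (retractMap_val 𝓕 k hk (⟨(i₂, j₂, upSet b), h₂⟩ : BF 𝓕))).symm
  show (if sInf (bfMulRaw (i₁, j₁, upSet a) (i₂, j₂, upSet b)).2.2 ≤ k then
          ((bfMulRaw (i₁, j₁, upSet a) (i₂, j₂, upSet b)).1,
            (bfMulRaw (i₁, j₁, upSet a) (i₂, j₂, upSet b)).2.1, upSet k)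
        else bfMulRaw (i₁, j₁, upSet a) (i₂, j₂, upSet b))
      = bfMulRaw
          (if sInf (upSet a) ≤ k then (i₁, j₁, upSet k) else (i₁, j₁, upSet a))
          (if sInf (upSet b) ≤ k then (i₂, j₂, upSet k) else (i₂, j₂, upSet b))
  rw [sInf_upSet a, sInf_upSet b, ite_upSet, ite_upSet]
  rcases lt_trichotomy j₁ i₂ with h | h | h
  · simp only [bfMulRaw, if_pos h, natShift_upSet, upSet_inter, sInf_upSet, ite_upSet]
    rw [shift_max_left _ (by omega : ((j₁ : ℤ) - (i₂ : ℤ)) ≤ 0)]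
  · subst h
    simp only [bfMulRaw, lt_self_iff_false, if_false, eq_self_iff_true, if_true, ite_true,
      ite_false, upSet_inter, sInf_upSet, ite_upSet]
    rw [max_max_k]
  · have h1 : ¬ j₁ < i₂ := by omega
    have h2 : ¬ j₁ = i₂ := by omega
    simp only [bfMulRaw, if_neg h1, if_neg h2, natShift_upSet, upSet_inter, sInf_upSet,
      ite_upSet]
    rw [shift_max_right _ (by omega : ((i₂ : ℤ) - (j₁ : ℤ)) ≤ 0)]
end

section
/- Let 𝓕 be an ω-closed family of nonempty inductive subsets of ℕ with [k) ∈ 𝓕 for some k ∈ ℕ. Then the subsemigroup B_ω^{𝓕_{≥k}} = {(i,j,[a)) ∈ B_ω^𝓕 : [a) ∈ 𝓕 and a ≥ k} is a homomorphic retract of the semigroup B_ω^𝓕. -/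
/-- A subset `T` of `S` is a homomorphic retract of `S` if it is the image of
a homomorphic retraction, i.e. of an idempotent homomorphism `S → S`. -/
def IsHomRetract {S : Type*} [Mul S] (T : Set S) : Prop :=
  ∃ h : S →ₙ* S, (∀ x, h (h x) = h x) ∧ Set.range h = T


lemma key_shift_left (s : ℤ) (hs : s ≤ 0) (k : ℕ) (F G : Set ℕ) :
    natShift s (F ∩ upSet k) ∩ (G ∩ upSet k) = (natShift s F ∩ G) ∩ upSet k := by
  ext m
  simp only [natShift, upSet, Set.mem_inter_iff, Set.mem_setOf_eq]
  constructor
  · rintro ⟨⟨j, ⟨hjF, hjk⟩, hm⟩, hG, hk'⟩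
    exact ⟨⟨⟨j, hjF, hm⟩, hG⟩, hk'⟩
  · rintro ⟨⟨⟨j, hjF, hm⟩, hG⟩, hk'⟩
    exact ⟨⟨j, ⟨hjF, by omega⟩, hm⟩, hG, hk'⟩

lemma key_shift_right (s : ℤ) (hs : s ≤ 0) (k : ℕ) (F G : Set ℕ) :
    (F ∩ upSet k) ∩ natShift s (G ∩ upSet k) = (F ∩ natShift s G) ∩ upSet k := by
  ext m
  simp only [natShift, upSet, Set.mem_inter_iff, Set.mem_setOf_eq]
  constructor
  · rintro ⟨⟨hF, hk'⟩, j, ⟨hjG, hjk⟩, hm⟩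
    exact ⟨⟨hF, ⟨j, hjG, hm⟩⟩, hk'⟩
  · rintro ⟨⟨hF, ⟨j, hjG, hm⟩⟩, hk'⟩
    exact ⟨⟨hF, hk'⟩, ⟨j, ⟨hjG, by omega⟩, hm⟩⟩

lemma inductive_eq_upSet {F : Set ℕ} (hne : F.Nonempty) (hi : IsInductiveSet F) :
    F = upSet (sInf F) := by
  ext m
  simp only [upSet, Set.mem_setOf_eq]
  constructor
  · exact fun hm => Nat.sInf_le hm
  · intro hm
    induction m, hm using Nat.le_induction with
    | base => exact Nat.sInf_mem hne
    | succ n hn ih => exact hi n ih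

theorem statement10 (𝓕 : OmegaFamily) (hind : InductiveNonempty 𝓕)
    (k : ℕ) (hk : upSet k ∈ 𝓕.sets) :
    IsHomRetract {x : BF 𝓕 | ∃ a, k ≤ a ∧ x.1.2.2 = upSet a} := by

  classical
  have hmemK : ∀ F ∈ 𝓕.sets, F ∩ upSet k ∈ 𝓕.sets := by
    intro F hF
    have : F ∩ upSet k = F ∩ natShift (-((0 : ℕ) : ℤ)) (upSet k) := by
      simp [natShift_zero]
    rw [this]
    exact 𝓕.closed.2 0 _ hF _ hk
  refine ⟨⟨fun x => ⟨(x.1.1, x.1.2.1, x.1.2.2 ∩ upSet k), hmemK _ x.2⟩, ?_⟩, ?_, ?_⟩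
  · rintro ⟨⟨i₁, j₁, F₁⟩, h₁⟩ ⟨⟨i₂, j₂, F₂⟩, h₂⟩
    apply Subtype.ext
    show ((bfMulRaw (i₁, j₁, F₁) (i₂, j₂, F₂)).1,
        (bfMulRaw (i₁, j₁, F₁) (i₂, j₂, F₂)).2.1,
        (bfMulRaw (i₁, j₁, F₁) (i₂, j₂, F₂)).2.2 ∩ upSet k)
      = bfMulRaw (i₁, j₁, F₁ ∩ upSet k) (i₂, j₂, F₂ ∩ upSet k)
    simp only [bfMulRaw]
    split_ifs with h h'
    · refine Prod.ext rfl (Prod.ext rfl ?_)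
      exact (key_shift_left ((j₁ : ℤ) - (i₂ : ℤ)) (by omega) k F₁ F₂).symm
    · refine Prod.ext rfl (Prod.ext rfl ?_)
      show (F₁ ∩ F₂) ∩ upSet k = (F₁ ∩ upSet k) ∩ (F₂ ∩ upSet k)
      ext m; simp only [Set.mem_inter_iff]; tauto
    · refine Prod.ext rfl (Prod.ext rfl ?_)
      exact (key_shift_right ((i₂ : ℤ) - (j₁ : ℤ)) (by omega) k F₁ F₂).symm
  · rintro ⟨⟨i, j, F⟩, hF⟩
    apply Subtype.ext
    refine Prod.ext rfl (Prod.ext rfl ?_)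
    show (F ∩ upSet k) ∩ upSet k = F ∩ upSet k
    rw [Set.inter_assoc, Set.inter_self]
  · ext ⟨⟨i, j, F⟩, hF⟩
    show (∃ y, _ = _) ↔ ∃ a, k ≤ a ∧ F = upSet a
    constructor
    · rintro ⟨⟨⟨i', j', F'⟩, hF'⟩, hx⟩
      obtain ⟨hne, hi⟩ := hind _ hF'
      obtain ⟨a0, heq⟩ : ∃ a0, F' = upSet a0 := ⟨sInf F', inductive_eq_upSet hne hi⟩
      have hFeq : F = F' ∩ upSet k := (congrArg (fun p => p.1.2.2) hx).symm
      refine ⟨max a0 k, le_max_right _ _, ?_⟩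
      rw [hFeq, heq]
      ext m
      simp only [upSet, Set.mem_inter_iff, Set.mem_setOf_eq]
      omega
    · rintro ⟨a, hka, hFa⟩
      refine ⟨⟨(i, j, F), hF⟩, ?_⟩
      apply Subtype.ext
      refine Prod.ext rfl (Prod.ext rfl ?_)
      show F ∩ upSet k = F
      rw [hFa]
      ext m
      simp only [upSet, Set.mem_inter_iff, Set.mem_setOf_eq]
      omega
end

section
/- Let 𝓕₁ and 𝓕₂ be ω-closed families of nonempty inductive subsets of ℕ, let n₁ = min(⋃𝓕₁) and n₂ = min(⋃𝓕₂), and suppose 𝔥 : B_ω^{𝓕₁} → B_ω^{𝓕₂} is a semigroup isomorphism. Then for every natural number k with [n₁+k) ∈ 𝓕₁ one has [n₂+k) ∈ 𝓕₂ and 𝔥(i,j,[n₁+k)) = (i,j,[n₂+k)) for all i,j ∈ ℕ; i.e., the isomorphism is uniquely determined and given by this formula. -/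
lemma upSet_inj {a b : ℕ} (h : upSet a = upSet b) : a = b := by
  have h1 : a ∈ upSet b := by rw [← h]; exact le_refl a
  have h2 : b ∈ upSet a := by rw [h]; exact le_refl b
  exact le_antisymm h2 h1

lemma triple_eq {A B C A' B' C' : ℕ} (h1 : A = A') (h2 : B = B') (h3 : C = C') :
    ((A, B, upSet C) : ℕ × ℕ × Set ℕ) = (A', B', upSet C') := by
  subst h1; subst h2; subst h3; rfl

lemma bfMulRaw_upSet (i₁ j₁ a i₂ j₂ b : ℕ) :
    bfMulRaw (i₁, j₁, upSet a) (i₂, j₂, upSet b) =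
      (i₁ + (i₂ - j₁), j₂ + (j₁ - i₂),
        upSet (max (a - (i₂ - j₁)) (b - (j₁ - i₂)))) := by
  unfold bfMulRaw
  dsimp only
  split_ifs with h h'
  · simp only [natShift_upSet, upSet_inter]
    exact triple_eq rfl (by omega) (by omega)
  · simp only [upSet_inter]
    exact triple_eq (by omega) (by omega) (by omega)
  · simp only [natShift_upSet, upSet_inter]
    exact triple_eq (by omega) (by omega) (by omega)

def el (𝓕 : OmegaFamily) (i j a : ℕ) (h : upSet a ∈ 𝓕.sets) : BF 𝓕 := ⟨(i, j, upSet a), h⟩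

lemma el_mul (𝓕 : OmegaFamily) (i₁ j₁ a i₂ j₂ b : ℕ)
    (ha : upSet a ∈ 𝓕.sets) (hb : upSet b ∈ 𝓕.sets) :
    (el 𝓕 i₁ j₁ a ha * el 𝓕 i₂ j₂ b hb).1 =
      (i₁ + (i₂ - j₁), j₂ + (j₁ - i₂),
        upSet (max (a - (i₂ - j₁)) (b - (j₁ - i₂)))) :=
  bfMulRaw_upSet i₁ j₁ a i₂ j₂ b

lemma mul_el_el (𝓕 : OmegaFamily) (i₁ j₁ a i₂ j₂ b : ℕ)
    (ha : upSet a ∈ 𝓕.sets) (hb : upSet b ∈ 𝓕.sets) :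
    ∃ hc : upSet (max (a - (i₂ - j₁)) (b - (j₁ - i₂))) ∈ 𝓕.sets,
      el 𝓕 i₁ j₁ a ha * el 𝓕 i₂ j₂ b hb =
        el 𝓕 (i₁ + (i₂ - j₁)) (j₂ + (j₁ - i₂))
          (max (a - (i₂ - j₁)) (b - (j₁ - i₂))) hc := by
  have hm := el_mul 𝓕 i₁ j₁ a i₂ j₂ b ha hb
  have h2 := (el 𝓕 i₁ j₁ a ha * el 𝓕 i₂ j₂ b hb).2
  rw [hm] at h2
  exact ⟨h2, Subtype.ext hm⟩

lemma el_ext (𝓕 : OmegaFamily) {i j a i' j' a' : ℕ}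
    (ha : upSet a ∈ 𝓕.sets) (ha' : upSet a' ∈ 𝓕.sets)
    (h1 : i = i') (h2 : j = j') (h3 : a = a') :
    el 𝓕 i j a ha = el 𝓕 i' j' a' ha' :=
  Subtype.ext (triple_eq h1 h2 h3)

lemma el_mul_eq (𝓕 : OmegaFamily) {i₁ j₁ a i₂ j₂ b I J C : ℕ}
    (ha : upSet a ∈ 𝓕.sets) (hb : upSet b ∈ 𝓕.sets) (hC : upSet C ∈ 𝓕.sets)
    (e1 : I = i₁ + (i₂ - j₁)) (e2 : J = j₂ + (j₁ - i₂))
    (e3 : C = max (a - (i₂ - j₁)) (b - (j₁ - i₂))) :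
    el 𝓕 i₁ j₁ a ha * el 𝓕 i₂ j₂ b hb = el 𝓕 I J C hC := by
  obtain ⟨hc, hm⟩ := mul_el_el 𝓕 i₁ j₁ a i₂ j₂ b ha hb
  rw [hm]
  exact el_ext 𝓕 hc hC e1.symm e2.symm e3.symm

lemma el_inj {𝓕 : OmegaFamily} {i j a i' j' a' : ℕ}
    {ha : upSet a ∈ 𝓕.sets} {ha' : upSet a' ∈ 𝓕.sets}
    (h : el 𝓕 i j a ha = el 𝓕 i' j' a' ha') : i = i' ∧ j = j' ∧ a = a' := by
  have h0 := Subtype.ext_iff.mp h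
  simp only [el, Prod.mk.injEq] at h0
  exact ⟨h0.1, h0.2.1, upSet_inj h0.2.2⟩

lemma mem_eq_upSet {𝓕 : OmegaFamily} (hIN : InductiveNonempty 𝓕) {F : Set ℕ}
    (hF : F ∈ 𝓕.sets) : F = upSet (sInf F) := by
  obtain ⟨hne, hind⟩ := hIN F hF
  ext m
  simp only [upSet, Set.mem_setOf_eq]
  constructor
  · exact fun hm => Nat.sInf_le hm
  · intro hm
    induction m, hm using Nat.le_induction with
    | base => exact Nat.sInf_mem hne
    | succ m _ ih => exact hind m ih

lemma exists_rep {𝓕 : OmegaFamily} (hIN : InductiveNonempty 𝓕) (x : BF 𝓕) :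
    ∃ i j a, ∃ ha : upSet a ∈ 𝓕.sets, x = el 𝓕 i j a ha := by
  obtain ⟨⟨i, j, F⟩, hF⟩ := x
  have hFe : F = upSet (sInf F) := mem_eq_upSet hIN hF
  refine ⟨i, j, sInf F, by rw [← hFe]; exact hF, ?_⟩
  exact Subtype.ext (by simp only [el]; rw [← hFe])

lemma base_le {𝓕 : OmegaFamily} {a : ℕ} (ha : upSet a ∈ 𝓕.sets) :
    sInf (⋃₀ 𝓕.sets) ≤ a :=
  Nat.sInf_le ⟨upSet a, ha, le_refl a⟩

lemma base_mem {𝓕 : OmegaFamily} (hIN : InductiveNonempty 𝓕) :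
    upSet (sInf (⋃₀ 𝓕.sets)) ∈ 𝓕.sets := by
  obtain ⟨F₀, hF₀⟩ := 𝓕.closed.1
  obtain ⟨m, hm⟩ := (hIN F₀ hF₀).1
  have hne : (⋃₀ 𝓕.sets).Nonempty := ⟨m, F₀, hF₀, hm⟩
  obtain ⟨F, hF, hnF⟩ := Nat.sInf_mem hne
  have hFe := mem_eq_upSet hIN hF
  have h1 : sInf F ≤ sInf (⋃₀ 𝓕.sets) := Nat.sInf_le hnF
  have h2 : sInf (⋃₀ 𝓕.sets) ≤ sInf F := by
    have hm2 : sInf F ∈ upSet (sInf F) := le_refl (sInf F)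
    rw [← hFe] at hm2
    exact Nat.sInf_le ⟨F, hF, hm2⟩
  have : sInf F = sInf (⋃₀ 𝓕.sets) := le_antisymm h1 h2
  rw [← this, ← hFe]; exact hF

lemma upSet_mem_of_le {𝓕 : OmegaFamily} {n a b : ℕ}
    (hn : upSet n ∈ 𝓕.sets) (ha : upSet a ∈ 𝓕.sets) (h1 : n ≤ b) (h2 : b ≤ a) :
    upSet b ∈ 𝓕.sets := by
  have h := 𝓕.closed.2 (a - b) _ hn _ ha
  rw [natShift_upSet, upSet_inter] at h
  have : max n (((-((a - b : ℕ) : ℤ)) + a).toNat) = b := by omega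
  rwa [this] at h

lemma one_spec {𝓕 : OmegaFamily} (hIN : InductiveNonempty 𝓕) {n : ℕ}
    (hn : upSet n ∈ 𝓕.sets) (hlb : ∀ a, upSet a ∈ 𝓕.sets → n ≤ a) (x : BF 𝓕) :
    el 𝓕 0 0 n hn * x = x ∧ x * el 𝓕 0 0 n hn = x := by
  obtain ⟨i, j, a, ha, rfl⟩ := exists_rep hIN x
  have hna := hlb a ha
  constructor
  · exact el_mul_eq 𝓕 hn ha ha (by omega) (by omega) (by omega)
  · exact el_mul_eq 𝓕 ha hn ha (by omega) (by omega) (by omega)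

lemma shape_left {𝓕 : OmegaFamily} (hIN : InductiveNonempty 𝓕) {n : ℕ}
    (hn : upSet n ∈ 𝓕.sets) (hlb : ∀ a, upSet a ∈ 𝓕.sets → n ≤ a)
    {x y : BF 𝓕} (hxy : y * x = el 𝓕 0 0 n hn) :
    ∃ c, x = el 𝓕 c 0 n hn := by
  obtain ⟨i, j, a, ha, rfl⟩ := exists_rep hIN x
  obtain ⟨i', j', b, hb, rfl⟩ := exists_rep hIN y
  have hna := hlb a ha
  obtain ⟨hc, hm⟩ := mul_el_el 𝓕 i' j' b i j a hb ha
  rw [hm] at hxy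
  obtain ⟨e1, e2, e3⟩ := el_inj hxy
  exact ⟨i, el_ext 𝓕 ha hn rfl (by omega) (by omega)⟩

lemma shape_right {𝓕 : OmegaFamily} (hIN : InductiveNonempty 𝓕) {n : ℕ}
    (hn : upSet n ∈ 𝓕.sets) (hlb : ∀ a, upSet a ∈ 𝓕.sets → n ≤ a)
    {x y : BF 𝓕} (hxy : x * y = el 𝓕 0 0 n hn) :
    ∃ c, x = el 𝓕 0 c n hn := by
  obtain ⟨i, j, a, ha, rfl⟩ := exists_rep hIN x
  obtain ⟨i', j', b, hb, rfl⟩ := exists_rep hIN y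
  have hna := hlb a ha
  obtain ⟨hc, hm⟩ := mul_el_el 𝓕 i j a i' j' b ha hb
  rw [hm] at hxy
  obtain ⟨e1, e2, e3⟩ := el_inj hxy
  exact ⟨j, el_ext 𝓕 ha hn (by omega) rfl (by omega)⟩

theorem statement16 (𝓕₁ 𝓕₂ : OmegaFamily)
    (h1 : InductiveNonempty 𝓕₁) (h2 : InductiveNonempty 𝓕₂)
    (e : BF 𝓕₁ ≃* BF 𝓕₂) :
    ∀ k : ℕ, upSet (sInf (⋃₀ 𝓕₁.sets) + k) ∈ 𝓕₁.sets →
      upSet (sInf (⋃₀ 𝓕₂.sets) + k) ∈ 𝓕₂.sets ∧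
      ∀ (i j : ℕ) (h : upSet (sInf (⋃₀ 𝓕₁.sets) + k) ∈ 𝓕₁.sets),
        (e ⟨(i, j, upSet (sInf (⋃₀ 𝓕₁.sets) + k)), h⟩).1 =
          (i, j, upSet (sInf (⋃₀ 𝓕₂.sets) + k)) := by
  intro k hk
  set n₁ := sInf (⋃₀ 𝓕₁.sets) with hn1d
  set n₂ := sInf (⋃₀ 𝓕₂.sets) with hn2d
  have hn₁ : upSet n₁ ∈ 𝓕₁.sets := base_mem h1
  have hn₂ : upSet n₂ ∈ 𝓕₂.sets := base_mem h2
  have lb₁ : ∀ a, upSet a ∈ 𝓕₁.sets → n₁ ≤ a := fun a ha => base_le ha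
  have lb₂ : ∀ a, upSet a ∈ 𝓕₂.sets → n₂ ≤ a := fun a ha => base_le ha
  -- the identity is mapped to the identity
  have eone : e (el 𝓕₁ 0 0 n₁ hn₁) = el 𝓕₂ 0 0 n₂ hn₂ := by
    have hL : ∀ y, e (el 𝓕₁ 0 0 n₁ hn₁) * y = y := by
      intro y
      have h := congrArg e (one_spec h1 hn₁ lb₁ (e.symm y)).1
      rwa [map_mul, MulEquiv.apply_symm_apply] at h
    have hR := (one_spec h2 hn₂ lb₂ (e (el 𝓕₁ 0 0 n₁ hn₁))).2
    exact hR.symm.trans (hL _)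
  have esymm_one : e.symm (el 𝓕₂ 0 0 n₂ hn₂) = el 𝓕₁ 0 0 n₁ hn₁ := by
    rw [← eone, MulEquiv.symm_apply_apply]
  -- p * q = 1
  have pq : ∀ (𝓕 : OmegaFamily) (n : ℕ) (hn : upSet n ∈ 𝓕.sets),
      el 𝓕 0 1 n hn * el 𝓕 1 0 n hn = el 𝓕 0 0 n hn :=
    fun 𝓕 n hn => el_mul_eq 𝓕 hn hn hn (by omega) (by omega) (by omega)
  have hq1inv : e (el 𝓕₁ 0 1 n₁ hn₁) * e (el 𝓕₁ 1 0 n₁ hn₁) = el 𝓕₂ 0 0 n₂ hn₂ := by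
    rw [← map_mul, pq 𝓕₁ n₁ hn₁, eone]
  obtain ⟨c, hc⟩ := shape_left h2 hn₂ lb₂ hq1inv
  obtain ⟨d, hd⟩ := shape_right h2 hn₂ lb₂ hq1inv
  have powq : ∀ m, e (el 𝓕₁ m 0 n₁ hn₁) = el 𝓕₂ (m * c) 0 n₂ hn₂ := by
    intro m
    induction m with
    | zero =>
      have h0 : el 𝓕₂ (0 * c) 0 n₂ hn₂ = el 𝓕₂ 0 0 n₂ hn₂ :=
        el_ext 𝓕₂ _ _ (by omega) rfl rfl
      rw [h0]; exact eone
    | succ m ih =>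
      have hstep : el 𝓕₁ (m + 1) 0 n₁ hn₁ = el 𝓕₁ m 0 n₁ hn₁ * el 𝓕₁ 1 0 n₁ hn₁ :=
        (el_mul_eq 𝓕₁ hn₁ hn₁ hn₁ (by omega) (by omega) (by omega)).symm
      rw [hstep, map_mul, ih, hc]
      exact el_mul_eq 𝓕₂ hn₂ hn₂ hn₂
        (by rw [Nat.succ_mul, Nat.sub_zero]) (by omega) (by omega)
  have hq2inv : e.symm (el 𝓕₂ 0 1 n₂ hn₂) * e.symm (el 𝓕₂ 1 0 n₂ hn₂) = el 𝓕₁ 0 0 n₁ hn₁ := by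
    rw [← map_mul, pq 𝓕₂ n₂ hn₂, esymm_one]
  obtain ⟨c', hc'⟩ := shape_left h1 hn₁ lb₁ hq2inv
  have hq2 : el 𝓕₂ 1 0 n₂ hn₂ = el 𝓕₂ (c' * c) 0 n₂ hn₂ := by
    have h := congrArg e hc'
    rwa [MulEquiv.apply_symm_apply, powq c'] at h
  have hc1 : c = 1 := by
    have h := (el_inj hq2).1
    exact Nat.eq_one_of_mul_eq_one_left h.symm
  subst hc1
  have powq1 : ∀ m, e (el 𝓕₁ m 0 n₁ hn₁) = el 𝓕₂ m 0 n₂ hn₂ := by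
    intro m
    rw [powq m]
    exact el_ext 𝓕₂ _ _ (by omega) rfl rfl
  have hd1 : d = 1 := by
    rw [hd, powq1 1] at hq1inv
    obtain ⟨hcm, hm⟩ := mul_el_el 𝓕₂ 0 d n₂ 1 0 n₂ hn₂ hn₂
    rw [hm] at hq1inv
    obtain ⟨e1, e2, e3⟩ := el_inj hq1inv
    omega
  subst hd1
  have powp : ∀ m, e (el 𝓕₁ 0 m n₁ hn₁) = el 𝓕₂ 0 m n₂ hn₂ := by
    intro m
    induction m with
    | zero => exact eone
    | succ m ih =>
      have hstep : el 𝓕₁ 0 (m + 1) n₁ hn₁ = el 𝓕₁ 0 m n₁ hn₁ * el 𝓕₁ 0 1 n₁ hn₁ :=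
        (el_mul_eq 𝓕₁ hn₁ hn₁ hn₁ (by omega) (by omega) (by omega)).symm
      rw [hstep, map_mul, ih, hd]
      exact el_mul_eq 𝓕₂ hn₂ hn₂ hn₂ (by omega) (by omega) (by omega)
  -- main induction on k
  have main : ∀ k, upSet (n₁ + k) ∈ 𝓕₁.sets →
      ∃ hk2 : upSet (n₂ + k) ∈ 𝓕₂.sets,
        ∀ hk1 : upSet (n₁ + k) ∈ 𝓕₁.sets,
          e (el 𝓕₁ 0 0 (n₁ + k) hk1) = el 𝓕₂ 0 0 (n₂ + k) hk2 := by
    intro k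
    induction k with
    | zero =>
      intro _
      refine ⟨by simpa using hn₂, fun hk1 => ?_⟩
      have h0 : el 𝓕₁ 0 0 (n₁ + 0) hk1 = el 𝓕₁ 0 0 n₁ hn₁ := el_ext 𝓕₁ _ _ rfl rfl (by omega)
      rw [h0, eone]
      exact el_ext 𝓕₂ _ _ rfl rfl (by omega)
    | succ k ih =>
      intro hk1'
      have hkA : upSet (n₁ + k) ∈ 𝓕₁.sets := upSet_mem_of_le hn₁ hk1' (by omega) (by omega)
      obtain ⟨hk2, ihe⟩ := ih hkA
      obtain ⟨u, v, b, hb, hx⟩ := exists_rep h2 (e (el 𝓕₁ 0 0 (n₁ + (k + 1)) hk1'))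
      have hnb := lb₂ b hb
      -- idempotency forces u = v
      have hidem : e (el 𝓕₁ 0 0 (n₁ + (k+1)) hk1') * e (el 𝓕₁ 0 0 (n₁ + (k+1)) hk1')
          = e (el 𝓕₁ 0 0 (n₁ + (k+1)) hk1') := by
        rw [← map_mul]
        exact congrArg e (el_mul_eq 𝓕₁ hk1' hk1' hk1' (by omega) (by omega) (by omega))
      rw [hx] at hidem
      obtain ⟨hcm0, hm0⟩ := mul_el_el 𝓕₂ u v b u v b hb hb
      rw [hm0] at hidem
      obtain ⟨i1, i2, i3⟩ := el_inj hidem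
      have huv : u = v := by omega
      subst huv
      -- key equation: p ∘ ε ∘ q = ε_k
      have s1 : el 𝓕₁ 0 1 n₁ hn₁ * el 𝓕₁ 0 0 (n₁ + (k+1)) hk1' = el 𝓕₁ 0 1 (n₁ + k) hkA :=
        el_mul_eq 𝓕₁ hn₁ hk1' hkA (by omega) (by omega) (by omega)
      have s2 : el 𝓕₁ 0 1 (n₁ + k) hkA * el 𝓕₁ 1 0 n₁ hn₁ = el 𝓕₁ 0 0 (n₁ + k) hkA :=
        el_mul_eq 𝓕₁ hkA hn₁ hkA (by omega) (by omega) (by omega)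
      have s3 : (el 𝓕₁ 0 1 n₁ hn₁ * el 𝓕₁ 0 0 (n₁ + (k+1)) hk1') * el 𝓕₁ 1 0 n₁ hn₁
          = el 𝓕₁ 0 0 (n₁ + k) hkA := by rw [s1, s2]
      have keyR := congrArg e s3
      rw [map_mul, map_mul, hd, powq1 1, ihe hkA, hx] at keyR
      obtain ⟨hcmA, hmA⟩ := mul_el_el 𝓕₂ 0 1 n₂ u u b hn₂ hb
      rw [hmA] at keyR
      obtain ⟨hcmB, hmB⟩ := mul_el_el 𝓕₂ (0 + (u - 1)) (u + (1 - u))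
        (max (n₂ - (u - 1)) (b - (1 - u))) 1 0 n₂ hcmA hn₂
      rw [hmB] at keyR
      obtain ⟨g1, g2, g3⟩ := el_inj keyR
      have hcases : (u = 0 ∧ b = n₂ + k + 1) ∨ (u = 0 ∧ k = 0 ∧ b = n₂) ∨ (u = 1 ∧ b = n₂ + k) := by
        omega
      rcases hcases with ⟨hu, hbv⟩ | ⟨hu, hk0, hbv⟩ | ⟨hu, hbv⟩
      · subst hu; subst hbv
        refine ⟨hb, fun hk1'' => ?_⟩
        have h0 : el 𝓕₁ 0 0 (n₁ + (k+1)) hk1'' = el 𝓕₁ 0 0 (n₁ + (k+1)) hk1' :=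
          el_ext 𝓕₁ _ _ rfl rfl rfl
        rw [h0, hx]
        exact el_ext 𝓕₂ _ _ rfl rfl (by omega)
      · exfalso
        subst hu; subst hbv; subst hk0
        have hxx : e (el 𝓕₁ 0 0 (n₁ + (0+1)) hk1') = e (el 𝓕₁ 0 0 n₁ hn₁) := by
          rw [hx, eone]
        have := el_inj (e.injective hxx)
        omega
      · exfalso
        subst hu; subst hbv
        have t1 : el 𝓕₁ 1 0 n₁ hn₁ * el 𝓕₁ 0 0 (n₁ + k) hkA = el 𝓕₁ 1 0 (n₁ + k) hkA :=
          el_mul_eq 𝓕₁ hn₁ hkA hkA (by omega) (by omega) (by omega)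
        have t2 : el 𝓕₁ 1 0 (n₁ + k) hkA * el 𝓕₁ 0 1 n₁ hn₁ = el 𝓕₁ 1 1 (n₁ + k) hkA :=
          el_mul_eq 𝓕₁ hkA hn₁ hkA (by omega) (by omega) (by omega)
        have t3 : (el 𝓕₁ 1 0 n₁ hn₁ * el 𝓕₁ 0 0 (n₁ + k) hkA) * el 𝓕₁ 0 1 n₁ hn₁
            = el 𝓕₁ 1 1 (n₁ + k) hkA := by rw [t1, t2]
        have keyT := congrArg e t3
        rw [map_mul, map_mul, powq1 1, ihe hkA, hd] at keyT
        have t1' : el 𝓕₂ 1 0 n₂ hn₂ * el 𝓕₂ 0 0 (n₂ + k) hk2 = el 𝓕₂ 1 0 (n₂ + k) hk2 :=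
          el_mul_eq 𝓕₂ hn₂ hk2 hk2 (by omega) (by omega) (by omega)
        have t2' : el 𝓕₂ 1 0 (n₂ + k) hk2 * el 𝓕₂ 0 1 n₂ hn₂ = el 𝓕₂ 1 1 (n₂ + k) hk2 :=
          el_mul_eq 𝓕₂ hk2 hn₂ hk2 (by omega) (by omega) (by omega)
        rw [t1', t2'] at keyT
        have hxx : e (el 𝓕₁ 0 0 (n₁ + (k+1)) hk1') = e (el 𝓕₁ 1 1 (n₁ + k) hkA) := by
          rw [hx, keyT]
        have := el_inj (e.injective hxx)
        omega
  -- conclusion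
  obtain ⟨hk2, he⟩ := main k hk
  refine ⟨hk2, fun i j h => ?_⟩
  have d1 : el 𝓕₁ i 0 n₁ hn₁ * el 𝓕₁ 0 0 (n₁ + k) hk = el 𝓕₁ i 0 (n₁ + k) hk :=
    el_mul_eq 𝓕₁ hn₁ hk hk (by omega) (by omega) (by omega)
  have d2 : el 𝓕₁ i 0 (n₁ + k) hk * el 𝓕₁ 0 j n₁ hn₁ = el 𝓕₁ i j (n₁ + k) hk :=
    el_mul_eq 𝓕₁ hk hn₁ hk (by omega) (by omega) (by omega)
  have d3 : (el 𝓕₁ i 0 n₁ hn₁ * el 𝓕₁ 0 0 (n₁ + k) hk) * el 𝓕₁ 0 j n₁ hn₁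
      = el 𝓕₁ i j (n₁ + k) hk := by rw [d1, d2]
  have him := congrArg e d3.symm
  rw [map_mul, map_mul, powq1 i, powp j, he hk] at him
  have d1' : el 𝓕₂ i 0 n₂ hn₂ * el 𝓕₂ 0 0 (n₂ + k) hk2 = el 𝓕₂ i 0 (n₂ + k) hk2 :=
    el_mul_eq 𝓕₂ hn₂ hk2 hk2 (by omega) (by omega) (by omega)
  have d2' : el 𝓕₂ i 0 (n₂ + k) hk2 * el 𝓕₂ 0 j n₂ hn₂ = el 𝓕₂ i j (n₂ + k) hk2 :=
    el_mul_eq 𝓕₂ hk2 hn₂ hk2 (by omega) (by omega) (by omega)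
  rw [d1', d2'] at him
  show (e (el 𝓕₁ i j (n₁ + k) hk)).1 = (i, j, upSet (n₂ + k))
  rw [him]
  rfl
end
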